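/- arXiv:1407.6815 — 2 statements merged into one kernel-verified Lean document; each statement's English description precedes it below -/
import Mathlib

section
/- In lightlike coordinates on the Minkowski plane (so ‖(y,z)‖² = yz), fix r, R > 0, let a = (0,0), and suppose points b, c, d, e ∈ ℝ² satisfy: ‖b‖² = ‖c‖² = -r², ‖b - e‖² = ‖c - e‖² = R², b ≠ c, ‖e‖² ≠ 0, and d = b + c - e. Then d = -((R² + r²)/‖e‖²)·e. -/
/-- Minkowski quadratic form in lightlike coordinates: `q (y,z) = y * z`. -/
def minkQ (α : ℝ × ℝ) : ℝ := α.1 * α.2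

/-- Functional equation of the Peaucellier inversor in the Minkowski plane: with
`a = 0`, `b, c` on both hyperbolae and `d` the fourth parallelogram vertex,
the linkage computes `e ↦ -((R² + r²)/‖e‖²)·e`. -/
theorem minkowski_peaucellier_inversion (r R : ℝ) (hr : 0 < r) (hR : 0 < R)
    (b c d e : ℝ × ℝ)
    (hb : minkQ b = -r ^ 2) (hc : minkQ c = -r ^ 2)
    (hbe : minkQ (b - e) = R ^ 2) (hce : minkQ (c - e) = R ^ 2)
    (hbc : b ≠ c) (he : minkQ e ≠ 0) (hd : d = b + c - e) :
    d = (-((R ^ 2 + r ^ 2) / minkQ e)) • e := by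
  simp only [minkQ, Prod.fst_sub, Prod.snd_sub] at hb hc hbe hce he ⊢
  have he1 : e.1 ≠ 0 := fun h => he (by rw [h]; ring)
  have he2 : e.2 ≠ 0 := fun h => he (by rw [h]; ring)
  have key : b.1 * e.2 + b.2 * e.1 = c.1 * e.2 + c.2 * e.1 := by
    linear_combination hce - hbe + hb - hc
  have hb1c1 : b.1 ≠ c.1 := by
    intro h
    apply hbc
    have h2 : b.2 * e.1 = c.2 * e.1 := by linear_combination key - e.2 * h
    exact Prod.ext h (mul_right_cancel₀ he1 h2)
  have hb2c2 : b.2 ≠ c.2 := by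
    intro h
    apply hbc
    have h2 : b.1 * e.2 = c.1 * e.2 := by linear_combination key - e.1 * h
    exact Prod.ext (mul_right_cancel₀ he2 h2) h
  have key1 : (b.1 - c.1) * ((b.1 + c.1) * e.2 - (e.1 * e.2 - R ^ 2 - r ^ 2)) = 0 := by
    linear_combination (-b.1) * hbe + (b.1 - e.1) * hb + c.1 * hce - (c.1 - e.1) * hc
  have sum1 : (b.1 + c.1) * e.2 = e.1 * e.2 - R ^ 2 - r ^ 2 := by
    rcases mul_eq_zero.mp key1 with h | h
    · exact absurd (sub_eq_zero.mp h) hb1c1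
    · linarith [sub_eq_zero.mp h]
  have key2 : (b.2 - c.2) * ((b.2 + c.2) * e.1 - (e.1 * e.2 - R ^ 2 - r ^ 2)) = 0 := by
    linear_combination (-b.2) * hbe + (b.2 - e.2) * hb + c.2 * hce - (c.2 - e.2) * hc
  have sum2 : (b.2 + c.2) * e.1 = e.1 * e.2 - R ^ 2 - r ^ 2 := by
    rcases mul_eq_zero.mp key2 with h | h
    · exact absurd (sub_eq_zero.mp h) hb2c2
    · linarith [sub_eq_zero.mp h]
  subst hd
  apply Prod.ext
  · show b.1 + c.1 - e.1 = -((R ^ 2 + r ^ 2) / (e.1 * e.2)) * e.1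
    field_simp
    linear_combination sum1
  · show b.2 + c.2 - e.2 = -((R ^ 2 + r ^ 2) / (e.1 * e.2)) * e.2
    field_simp
    linear_combination sum2
end

section
/- In lightlike coordinates (y,z) on the Minkowski plane with q(y,z) = yz, fix r, R > 0 and let e ∈ ℝ² with q(e) ≠ 0, and set d = -((R² + r²)/q(e))·e. Then d lies on the hyperbola {γ : (y_γ + 1)(z_γ - 1) = -1} if and only if y_e - z_e = -(R² + r²). -/
/-- The Peaucellier image `d = -((R²+r²)/q(e))·e` lies on the hyperbola
`(y+1)(z-1) = -1` if and only if `y_e - z_e = -(R² + r²)`. -/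
theorem minkowski_peaucellier_line (r R : ℝ) (hr : 0 < r) (hR : 0 < R)
    (e d : ℝ × ℝ) (he : minkQ e ≠ 0)
    (hd : d = (-((R ^ 2 + r ^ 2) / minkQ e)) • e) :
    ((d.1 + 1) * (d.2 - 1) = -1) ↔ e.1 - e.2 = -(R ^ 2 + r ^ 2) := by
  have hq : e.1 * e.2 ≠ 0 := he
  have hs : R ^ 2 + r ^ 2 ≠ 0 := by positivity
  have he1 : e.1 ≠ 0 := left_ne_zero_of_mul hq
  have he2 : e.2 ≠ 0 := right_ne_zero_of_mul hq
  subst hd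
  simp only [Prod.smul_fst, Prod.smul_snd, smul_eq_mul, minkQ]
  field_simp
  constructor
  · intro h
    have h' : (R ^ 2 + r ^ 2) * ((e.1 - e.2 + (R ^ 2 + r ^ 2)) * (e.1 * e.2)) = 0 := by
      ring_nf
      ring_nf at h
      linear_combination (e.1 * e.2) * h
    have := mul_eq_zero.mp h'
    rcases this with h1 | h2
    · exact absurd h1 hs
    · rcases mul_eq_zero.mp h2 with h3 | h4
      · linarith
      · exact absurd h4 hq
  · intro h
    linear_combination (r ^ 2 + R ^ 2) * h
end
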